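/- Let p₁ ≤ p₂ be in [0,1]. For bond percolation on a finite graph G, for any vertex v and integer r > 0, the expected size of ∂B_v(r) under p₂-percolation is at most (p₂/p₁)^r times the expected size of ∂B_v(r) under p₁-percolation. -/

import Mathlib

open Classical

noncomputable section

/-- Two vertices are joined by an edge of `G` that is open in the configuration `ω`. -/
def OpenAdj {V : Type*} (G : SimpleGraph V) (ω : Sym2 V → Bool) (x y : V) : Prop :=
  G.Adj x y ∧ ω s(x, y) = true

/-- `x` and `y` are connected by an open path with at most `r` edges. -/
def ConnWithin {V : Type*} (G : SimpleGraph V) (ω : Sym2 V → Bool) (x y : V) (r : ℕ) : Prop :=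
  ∃ l : List V, List.Chain (OpenAdj G ω) x l ∧
    (x :: l).getLast (List.cons_ne_nil x l) = y ∧ l.length ≤ r

/-- The intrinsic (open-path) distance from `x` to `y` equals `r`. -/
def DistEq {V : Type*} (G : SimpleGraph V) (ω : Sym2 V → Bool) (x y : V) (r : ℕ) : Prop :=
  ConnWithin G ω x y r ∧ ∀ s < r, ¬ ConnWithin G ω x y s

/-- The boundary `∂B_x(r)` of the intrinsic ball of radius `r` around `x` is nonempty. -/
def SphereNonempty {V : Type*} (G : SimpleGraph V) (ω : Sym2 V → Bool) (x : V) (r : ℕ) : Prop :=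
  ∃ y, DistEq G ω x y r

/-- The Bernoulli product weight of a single percolation configuration. -/
def edgeWeight {V : Type*} [Fintype V] [DecidableEq V] (p : ℝ) (ω : Sym2 V → Bool) : ℝ :=
  ∏ e : Sym2 V, if ω e then p else 1 - p

/-- The probability of the event `S` under bond percolation with parameter `p`. -/
def percProb {V : Type*} [Fintype V] [DecidableEq V] (p : ℝ) (S : Set (Sym2 V → Bool)) : ℝ :=
  ∑ ω : Sym2 V → Bool, if ω ∈ S then edgeWeight p ω else 0

/-- Expectation under bond percolation with parameter `p`. -/
def percExp {V : Type*} [Fintype V] [DecidableEq V] (p : ℝ) (f : (Sym2 V → Bool) → ℝ) : ℝ :=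
  ∑ ω : Sym2 V → Bool, edgeWeight p ω * f ω

/-- The number of vertices at intrinsic distance exactly `r` from `x`: `|∂B_x(r)|`. -/
def sphereSize {V : Type*} (G : SimpleGraph V) (ω : Sym2 V → Bool) (x : V) (r : ℕ) : ℕ :=
  Nat.card {y : V // DistEq G ω x y r}

def edgeList {V : Type*} : V → List V → List (Sym2 V)
  | _, [] => []
  | x, y :: l => s(x, y) :: edgeList y l

lemma edgeList_length {V : Type*} (x : V) (l : List V) : (edgeList x l).length = l.length := by
  induction l generalizing x with
  | nil => rfl
  | cons y l ih => simp [edgeList, ih]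

lemma connWithin_mono {V : Type*} (G : SimpleGraph V) {ω ω' : Sym2 V → Bool}
    (h : ∀ e, ω e = true → ω' e = true) {x y : V} {r : ℕ} (hc : ConnWithin G ω x y r) :
    ConnWithin G ω' x y r := by
  obtain ⟨l, hl, hy, hlen⟩ := hc
  exact ⟨l, List.IsChain.imp (fun a b hab => ⟨hab.1, h _ hab.2⟩) hl, hy, hlen⟩

lemma chain_meet {V : Type*} (G : SimpleGraph V) (ω η : Sym2 V → Bool) :
    ∀ (x : V) (l : List V), List.Chain (OpenAdj G ω) x l →
      (∀ e ∈ edgeList x l, η e = true) →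
      List.Chain (OpenAdj G (fun e => ω e && η e)) x l
  | _, [], _, _ => List.Chain.nil
  | x, y :: l, h, he => by
    unfold List.Chain at h ⊢
    rw [List.chain_cons] at h ⊢
    refine ⟨⟨h.1.1, ?_⟩, chain_meet G ω η y l h.2 fun e hme => he e (by simp [edgeList, hme])⟩
    simp only [Bool.and_eq_true]
    exact ⟨h.1.2, he s(x, y) (by simp [edgeList])⟩

lemma edgeWeight_nonneg {V : Type*} [Fintype V] [DecidableEq V] {p : ℝ}
    (h0 : 0 ≤ p) (h1 : p ≤ 1) (ω : Sym2 V → Bool) : 0 ≤ edgeWeight p ω :=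
  Finset.prod_nonneg <|  fun e _ => by by_cases h : ω e <;> simp [h] <;> linarith

lemma sum_indicator_weight {V : Type*} [Fintype V] [DecidableEq V] {q : ℝ}
    (S : Finset (Sym2 V)) :
    ∑ η : Sym2 V → Bool, (if ∀ e ∈ S, η e = true then edgeWeight q η else 0)
      = q ^ S.card := by
  have key : ∀ η : Sym2 V → Bool,
      (if ∀ e ∈ S, η e = true then edgeWeight q η else 0)
        = ∏ e : Sym2 V, (if e ∈ S ∧ η e = false then 0 else if η e then q else 1 - q) := by
    intro η
    by_cases h : ∀ e ∈ S, η e = true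
    · rw [if_pos h]
      unfold edgeWeight
      refine Finset.prod_congr rfl fun e _ => ?_
      by_cases he : η e
      · simp [he]
      · have heS : e ∉ S := fun hS => by simp [h e hS] at he
        simp [he, heS]
    · rw [if_neg h]
      push_neg at h
      obtain ⟨e, heS, hef⟩ := h
      exact (Finset.prod_eq_zero (Finset.mem_univ e) (by simp [heS, hef])).symm
  simp_rw [key]
  have swap : (∏ e : Sym2 V, ∑ b : Bool, (if e ∈ S ∧ b = false then 0 else if b then q else 1 - q))
      = ∑ η : Sym2 V → Bool, ∏ e : Sym2 V,
          (if e ∈ S ∧ η e = false then 0 else if η e then q else 1 - q) := by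
    rw [Finset.prod_univ_sum, Fintype.piFinset_univ]
  rw [← swap]
  have : ∀ e : Sym2 V, (∑ b : Bool, (if e ∈ S ∧ b = false then 0 else if b then q else 1 - q))
      = if e ∈ S then q else 1 := by
    intro e
    rw [Fintype.sum_bool]
    by_cases h : e ∈ S <;> simp [h]
  simp_rw [this]
  rw [Finset.prod_ite_mem, Finset.univ_inter, Finset.prod_const]

lemma fiber_sum {V : Type*} [Fintype V] [DecidableEq V] (p q : ℝ) (ω : Sym2 V → Bool) :
    ∑ ω₂ : Sym2 V → Bool, ∑ η : Sym2 V → Bool,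
      (if (fun e => ω₂ e && η e) = ω then edgeWeight p ω₂ * edgeWeight q η else 0)
      = edgeWeight (p * q) ω := by
  classical
  have e1 : ∀ (ω₂ η : Sym2 V → Bool),
      (if (fun e => ω₂ e && η e) = ω then edgeWeight p ω₂ * edgeWeight q η else 0)
        = ∏ e : Sym2 V, (if (ω₂ e && η e) = ω e then
            (if ω₂ e then p else 1 - p) * (if η e then q else 1 - q) else 0) := by
    intro ω₂ η
    by_cases h : (fun e => ω₂ e && η e) = ω
    · rw [if_pos h]
      rw [show edgeWeight p ω₂ * edgeWeight q η
          = ∏ e : Sym2 V, (if ω₂ e then p else 1 - p) * (if η e then q else 1 - q) from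
        (Finset.prod_mul_distrib).symm]
      refine Finset.prod_congr rfl fun e _ => ?_
      rw [if_pos (congrFun h e)]
    · rw [if_neg h]
      have : ∃ e, (ω₂ e && η e) ≠ ω e := by
        by_contra hc
        push_neg at hc
        exact h (funext hc)
      obtain ⟨e, he⟩ := this
      refine (Finset.prod_eq_zero (Finset.mem_univ e) ?_).symm
      rw [if_neg he]
  simp_rw [e1]
  -- turn double sum over pairs into sum over functions to Bool × Bool
  have e2 : (∑ ω₂ : Sym2 V → Bool, ∑ η : Sym2 V → Bool, ∏ e : Sym2 V,
        (if (ω₂ e && η e) = ω e then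
          (if ω₂ e then p else 1 - p) * (if η e then q else 1 - q) else 0))
      = ∑ ζ : Sym2 V → Bool × Bool, ∏ e : Sym2 V,
        (if ((ζ e).1 && (ζ e).2) = ω e then
          (if (ζ e).1 then p else 1 - p) * (if (ζ e).2 then q else 1 - q) else 0) := by
    have step : (∑ ζ : Sym2 V → Bool × Bool, ∏ e : Sym2 V,
        (if ((ζ e).1 && (ζ e).2) = ω e then
          (if (ζ e).1 then p else 1 - p) * (if (ζ e).2 then q else 1 - q) else 0))
        = ∑ z : (Sym2 V → Bool) × (Sym2 V → Bool), ∏ e : Sym2 V,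
          (if (z.1 e && z.2 e) = ω e then
            (if z.1 e then p else 1 - p) * (if z.2 e then q else 1 - q) else 0) :=
      Fintype.sum_equiv (Equiv.arrowProdEquivProdArrow (Sym2 V) (fun _ => Bool) (fun _ => Bool)) _ _ (fun ζ => rfl)
    rw [step, Fintype.sum_prod_type]
  rw [e2]
  have e3 : (∑ ζ : Sym2 V → Bool × Bool, ∏ e : Sym2 V,
        (if ((ζ e).1 && (ζ e).2) = ω e then
          (if (ζ e).1 then p else 1 - p) * (if (ζ e).2 then q else 1 - q) else 0))
      = ∏ e : Sym2 V, ∑ b : Bool × Bool,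
        (if (b.1 && b.2) = ω e then
          (if b.1 then p else 1 - p) * (if b.2 then q else 1 - q) else 0) := by
    rw [Finset.prod_univ_sum, Fintype.piFinset_univ]
  rw [e3]
  unfold edgeWeight
  refine Finset.prod_congr rfl fun e _ => ?_
  rw [Fintype.sum_prod_type, Fintype.sum_bool]
  cases hw : ω e <;> simp [Fintype.sum_bool, hw] <;> ring

lemma split_sum {V : Type*} [Fintype V] [DecidableEq V] (p q : ℝ)
    (F : (Sym2 V → Bool) → ℝ) :
    ∑ ω₂ : Sym2 V → Bool, ∑ η : Sym2 V → Bool,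
        edgeWeight p ω₂ * edgeWeight q η * F (fun e => ω₂ e && η e)
      = ∑ ω : Sym2 V → Bool, edgeWeight (p * q) ω * F ω := by
  classical
  have e1 : ∀ (ω₂ η : Sym2 V → Bool),
      edgeWeight p ω₂ * edgeWeight q η * F (fun e => ω₂ e && η e)
        = ∑ ω : Sym2 V → Bool,
            (if (fun e => ω₂ e && η e) = ω then edgeWeight p ω₂ * edgeWeight q η else 0) * F ω := by
    intro ω₂ η
    rw [Finset.sum_eq_single (fun e => ω₂ e && η e)]
    · rw [if_pos rfl]
    · intro b _ hb
      rw [if_neg (fun hc => hb hc.symm), zero_mul]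
    · intro h; exact absurd (Finset.mem_univ _) h
  simp_rw [e1]
  have e2 : (∑ ω₂ : Sym2 V → Bool, ∑ η : Sym2 V → Bool, ∑ ω : Sym2 V → Bool,
        (if (fun e => ω₂ e && η e) = ω then edgeWeight p ω₂ * edgeWeight q η else 0) * F ω)
      = ∑ ω : Sym2 V → Bool, ∑ ω₂ : Sym2 V → Bool, ∑ η : Sym2 V → Bool,
        (if (fun e => ω₂ e && η e) = ω then edgeWeight p ω₂ * edgeWeight q η else 0) * F ω := by
    rw [show (∑ ω₂ : Sym2 V → Bool, ∑ η : Sym2 V → Bool, ∑ ω : Sym2 V → Bool,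
        (if (fun e => ω₂ e && η e) = ω then edgeWeight p ω₂ * edgeWeight q η else 0) * F ω)
        = ∑ ω₂ : Sym2 V → Bool, ∑ ω : Sym2 V → Bool, ∑ η : Sym2 V → Bool,
        (if (fun e => ω₂ e && η e) = ω then edgeWeight p ω₂ * edgeWeight q η else 0) * F ω from
      Finset.sum_congr rfl fun _ _ => Finset.sum_comm]
    exact Finset.sum_comm
  rw [e2]
  refine Finset.sum_congr rfl fun ω _ => ?_
  simp_rw [← Finset.sum_mul]
  rw [fiber_sum p q ω]

lemma distEq_meet {V : Type*} (G : SimpleGraph V) {ω η : Sym2 V → Bool} {v y : V} {r : ℕ}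
    (h : DistEq G ω v y r) (hη : ∀ e ∈ edgeList v h.1.choose, η e = true) :
    DistEq G (fun e => ω e && η e) v y r := by
  obtain ⟨hc, hg, hlen⟩ := h.1.choose_spec
  refine ⟨⟨h.1.choose, chain_meet G ω η v _ hc hη, hg, hlen⟩, fun s hs hcs => h.2 s hs ?_⟩
  exact connWithin_mono G (fun e he => by simp only [Bool.and_eq_true] at he; exact he.1) hcs

lemma prob_compare {V : Type*} [Fintype V] [DecidableEq V] (G : SimpleGraph V)
    (p₁ p₂ : ℝ) (hp₁ : 0 < p₁) (h₁₂ : p₁ ≤ p₂) (hp₂ : p₂ ≤ 1) (v y : V) (r : ℕ) :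
    percProb p₂ {ω | DistEq G ω v y r} ≤ (p₂ / p₁) ^ r * percProb p₁ {ω | DistEq G ω v y r} := by
  have hp₂0 : 0 < p₂ := lt_of_lt_of_le hp₁ h₁₂
  set q : ℝ := p₁ / p₂ with hq
  have hq0 : 0 < q := div_pos hp₁ hp₂0
  have hq1 : q ≤ 1 := div_le_one_of_le₀ h₁₂ hp₂0.le
  have hpq : p₂ * q = p₁ := by rw [hq]; field_simp
  set S : (Sym2 V → Bool) → Finset (Sym2 V) := fun ω =>
    if h : DistEq G ω v y r then (edgeList v h.1.choose).toFinset else ∅ with hS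
  have hScard : ∀ ω, DistEq G ω v y r → (S ω).card ≤ r := by
    intro ω h
    rw [hS]; simp only [dif_pos h]
    calc (edgeList v h.1.choose).toFinset.card
        ≤ (edgeList v h.1.choose).length := (edgeList v h.1.choose).toFinset_card_le
      _ = h.1.choose.length := edgeList_length _ _
      _ ≤ r := h.1.choose_spec.2.2
  have hSmeet : ∀ ω η : Sym2 V → Bool, DistEq G ω v y r → (∀ e ∈ S ω, η e = true) →
      DistEq G (fun e => ω e && η e) v y r := by
    intro ω η h hη
    refine distEq_meet G h fun e he => hη e ?_
    rw [hS]; simp only [dif_pos h, List.mem_toFinset]; exact he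
  have wnn : ∀ ω₂ η : Sym2 V → Bool, 0 ≤ edgeWeight p₂ ω₂ * edgeWeight (V := V) q η :=
    fun ω₂ η => mul_nonneg (edgeWeight_nonneg hp₂0.le hp₂ ω₂) (edgeWeight_nonneg hq0.le hq1 η)
  have key : q ^ r * percProb p₂ {ω | DistEq G ω v y r}
      ≤ percProb p₁ {ω | DistEq G ω v y r} := by
    unfold percProb
    rw [Finset.mul_sum]
    have step1 : ∀ ω₂ : Sym2 V → Bool,
        q ^ r * (if ω₂ ∈ {ω | DistEq G ω v y r} then edgeWeight p₂ ω₂ else 0)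
          ≤ (if DistEq G ω₂ v y r then q ^ (S ω₂).card * edgeWeight p₂ ω₂ else 0) := by
      intro ω₂
      by_cases h : DistEq G ω₂ v y r
      · rw [if_pos (show ω₂ ∈ {ω | DistEq G ω v y r} from h), if_pos h]
        exact mul_le_mul_of_nonneg_right
          (pow_le_pow_of_le_one hq0.le hq1 (hScard ω₂ h))
          (edgeWeight_nonneg hp₂0.le hp₂ ω₂)
      · rw [if_neg (show ω₂ ∉ {ω | DistEq G ω v y r} from h), if_neg h, mul_zero]
    refine le_trans (Finset.sum_le_sum fun ω₂ _ => step1 ω₂) ?_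
    have step2 : ∀ ω₂ : Sym2 V → Bool,
        (if DistEq G ω₂ v y r then q ^ (S ω₂).card * edgeWeight p₂ ω₂ else 0)
          = ∑ η : Sym2 V → Bool, (if DistEq G ω₂ v y r ∧ (∀ e ∈ S ω₂, η e = true) then
              edgeWeight p₂ ω₂ * edgeWeight q η else 0) := by
      intro ω₂
      by_cases h : DistEq G ω₂ v y r
      · simp only [if_pos h, h, true_and]
        rw [mul_comm, ← sum_indicator_weight (S ω₂), Finset.mul_sum]
        refine Finset.sum_congr rfl fun η _ => ?_
        by_cases hc : ∀ e ∈ S ω₂, η e = true <;> simp [hc]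
      · simp [h]
    rw [Finset.sum_congr rfl fun ω₂ _ => step2 ω₂]
    have step3 : ∀ ω₂ η : Sym2 V → Bool,
        (if DistEq G ω₂ v y r ∧ (∀ e ∈ S ω₂, η e = true) then
            edgeWeight p₂ ω₂ * edgeWeight q η else 0)
          ≤ (if DistEq G (fun e => ω₂ e && η e) v y r then
              edgeWeight p₂ ω₂ * edgeWeight q η else 0) := by
      intro ω₂ η
      by_cases h : DistEq G ω₂ v y r ∧ (∀ e ∈ S ω₂, η e = true)
      · rw [if_pos h, if_pos (hSmeet ω₂ η h.1 h.2)]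
      · rw [if_neg h]
        by_cases h2 : DistEq G (fun e => ω₂ e && η e) v y r
        · rw [if_pos h2]; exact wnn ω₂ η
        · rw [if_neg h2]
    refine le_trans (Finset.sum_le_sum fun ω₂ _ =>
      Finset.sum_le_sum fun η _ => step3 ω₂ η) ?_
    have step4 := split_sum (V := V) p₂ q (fun ω => if DistEq G ω v y r then (1:ℝ) else 0)
    rw [hpq] at step4
    calc (∑ ω₂ : Sym2 V → Bool, ∑ η : Sym2 V → Bool,
          (if DistEq G (fun e => ω₂ e && η e) v y r then
            edgeWeight p₂ ω₂ * edgeWeight q η else 0))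
        = ∑ ω₂ : Sym2 V → Bool, ∑ η : Sym2 V → Bool,
            edgeWeight p₂ ω₂ * edgeWeight q η *
              (if DistEq G (fun e => ω₂ e && η e) v y r then (1:ℝ) else 0) := by
          refine Finset.sum_congr rfl fun ω₂ _ => Finset.sum_congr rfl fun η _ => ?_
          by_cases h : DistEq G (fun e => ω₂ e && η e) v y r <;> simp [h]
      _ = ∑ ω : Sym2 V → Bool, edgeWeight p₁ ω * (if DistEq G ω v y r then (1:ℝ) else 0) :=
          step4
      _ = ∑ ω : Sym2 V → Bool, (if ω ∈ {ω | DistEq G ω v y r} then edgeWeight p₁ ω else 0) := by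
          refine Finset.sum_congr rfl fun ω _ => ?_
          by_cases h : DistEq G ω v y r <;> simp [h, Set.mem_setOf_eq]
      _ ≤ ∑ ω : Sym2 V → Bool, (if ω ∈ {ω | DistEq G ω v y r} then edgeWeight p₁ ω else 0) :=
          le_rfl
  have hqq : (p₂ / p₁) ^ r * q ^ r = 1 := by
    rw [← mul_pow]
    rw [show p₂ / p₁ * q = 1 by rw [hq]; field_simp]
    exact one_pow r
  calc percProb p₂ {ω | DistEq G ω v y r}
      = (p₂ / p₁) ^ r * (q ^ r * percProb p₂ {ω | DistEq G ω v y r}) := by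
        rw [← mul_assoc, hqq, one_mul]
    _ ≤ (p₂ / p₁) ^ r * percProb p₁ {ω | DistEq G ω v y r} :=
        mul_le_mul_of_nonneg_left key (pow_nonneg (div_nonneg hp₂0.le hp₁.le) r)

lemma sphereSize_eq {V : Type*} [Fintype V] (G : SimpleGraph V) (ω : Sym2 V → Bool)
    (x : V) (r : ℕ) :
    (sphereSize G ω x r : ℝ) = ∑ y : V, (if DistEq G ω x y r then (1:ℝ) else 0) := by
  unfold sphereSize
  rw [Nat.card_eq_fintype_card, Fintype.card_subtype, Finset.card_filter]
  push_cast
  exact Finset.sum_congr rfl fun y _ => by by_cases h : DistEq G ω x y r <;> simp [h]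

lemma percExp_eq {V : Type*} [Fintype V] [DecidableEq V] (G : SimpleGraph V) (p : ℝ)
    (v : V) (r : ℕ) :
    percExp p (fun ω => (sphereSize G ω v r : ℝ))
      = ∑ y : V, percProb p {ω | DistEq G ω v y r} := by
  unfold percExp percProb
  simp_rw [sphereSize_eq, Finset.mul_sum]
  rw [Finset.sum_comm]
  refine Finset.sum_congr rfl fun y _ => Finset.sum_congr rfl fun ω _ => ?_
  by_cases h : DistEq G ω v y r <;> simp [h, Set.mem_setOf_eq]


/-- **Coupling monotonicity of intrinsic spheres (expectations).**  For `0 < p₁ ≤ p₂ ≤ 1`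
and any vertex `v` and integer `r > 0`, `E_{p₂}|∂B_v(r)| ≤ (p₂/p₁)^r E_{p₁}|∂B_v(r)|`. -/
theorem sphere_size_expectation_comparison {V : Type*} [Fintype V] [DecidableEq V]
    (G : SimpleGraph V) (p₁ p₂ : ℝ) (hp₁ : 0 < p₁) (h₁₂ : p₁ ≤ p₂) (hp₂ : p₂ ≤ 1)
    (v : V) (r : ℕ) (hr : 0 < r) :
    percExp p₂ (fun ω => (sphereSize G ω v r : ℝ))
      ≤ (p₂ / p₁) ^ r * percExp p₁ (fun ω => (sphereSize G ω v r : ℝ)) := by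
  rw [percExp_eq, percExp_eq, Finset.mul_sum]
  exact Finset.sum_le_sum fun y _ => prob_compare G p₁ p₂ hp₁ h₁₂ hp₂ v y r

end
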